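/- For all α ∈ [0,2]: Γ(α/2+2)·Γ(α+9/2) ≥ Γ(α/2+9/2)·Γ(α+2). -/

import Mathlib

lemma gamma_four_point {a b d : ℝ} (ha : 0 < a) (hab : a ≤ b) (hbd : b ≤ d) :
    Real.Gamma b * Real.Gamma (a + d - b) ≤ Real.Gamma a * Real.Gamma d := by
  have hd : 0 < d := lt_of_lt_of_le ha (hab.trans hbd)
  have hc : 0 < a + d - b := by linarith
  rcases eq_or_lt_of_le (hab.trans hbd) with h | h
  · have hb : b = a := le_antisymm (h ▸ hbd) hab
    rw [hb]
    have : a + d - a = d := by ring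
    rw [this]
  · set t : ℝ := (d - b) / (d - a) with ht_def
    have hda : 0 < d - a := by linarith
    have ht0 : 0 ≤ t := div_nonneg (by linarith) hda.le
    have ht1 : 0 ≤ 1 - t := by
      rw [sub_nonneg, ht_def, div_le_one hda]; linarith
    have key := Real.convexOn_log_Gamma.2 (Set.mem_Ioi.mpr ha) (Set.mem_Ioi.mpr hd)
      ht0 ht1 (by ring)
    have key2 := Real.convexOn_log_Gamma.2 (Set.mem_Ioi.mpr ha) (Set.mem_Ioi.mpr hd)
      ht1 ht0 (by ring)
    have htm : t * (d - a) = d - b := by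
      rw [ht_def]; exact div_mul_cancel₀ _ hda.ne'
    have hb_eq : t • a + (1 - t) • d = b := by
      simp only [smul_eq_mul]; linear_combination (-1:ℝ) * htm
    have hc_eq : (1 - t) • a + t • d = a + d - b := by
      simp only [smul_eq_mul]; linear_combination htm
    rw [hb_eq] at key
    rw [hc_eq] at key2
    simp only [Function.comp_apply, smul_eq_mul] at key key2
    have hlog : Real.log (Real.Gamma b) + Real.log (Real.Gamma (a + d - b)) ≤
        Real.log (Real.Gamma a) + Real.log (Real.Gamma d) := by nlinarith
    have hGb := Real.Gamma_pos_of_pos (lt_of_lt_of_le ha hab)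
    have hGc := Real.Gamma_pos_of_pos hc
    have hGa := Real.Gamma_pos_of_pos ha
    have hGd := Real.Gamma_pos_of_pos hd
    rw [← Real.log_mul hGb.ne' hGc.ne', ← Real.log_mul hGa.ne' hGd.ne'] at hlog
    exact (Real.log_le_log_iff (by positivity) (by positivity)).mp hlog

theorem stmt6 (α : ℝ) (hα : α ∈ Set.Icc (0:ℝ) 2) :
    Real.Gamma (α / 2 + 9 / 2) * Real.Gamma (α + 2) ≤
      Real.Gamma (α / 2 + 2) * Real.Gamma (α + 9 / 2) := by
  obtain ⟨h0, h2⟩ := hα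
  have h := gamma_four_point (a := α / 2 + 2) (b := α / 2 + 9 / 2) (d := α + 9 / 2)
    (by linarith) (by linarith) (by linarith)
  have : α / 2 + 2 + (α + 9 / 2) - (α / 2 + 9 / 2) = α + 2 := by ring
  rwa [this] at h
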